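/- Let H be a complex Hadamard matrix of order n, let {R, R₁, R₂} be a partition of its set of rows and {C, C₁, C₂} a partition of its set of columns, and let s ∈ ℂ be such that: (1) every column of the submatrix with rows R and columns C sums to s, i.e. Σ_{i∈R} H_{ij} = s for all j ∈ C; (2) every column of the submatrix with rows R₁ and columns C₁ sums to −conj(s), i.e. Σ_{i∈R₁} H_{ij} = −conj(s) for all j ∈ C₁; (3) H_{ij} = 1 for all (i,j) ∈ R × C₁ and all (i,j) ∈ R₁ × C; (4) for every j ∈ C₂, both Σ_{i∈R} H_{ij} = 0 and Σ_{i∈R₁} H_{ij} = 0. Then for any z ∈ ℂ with |z| = 1, the matrix K obtained from H by multiplying every entry with (i,j) ∈ R₁ × C₂ by z and every entry with (i,j) ∈ R₂ × C₁ by conj(z), leaving all other entries unchanged, is a complex Hadamard matrix of order n. -/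

import Mathlib

/-- Conditions for rank 2 switchings of complex Hadamard matrices: under conditions
(1)-(4) on the partitions `{R, R₁, R₂}` of rows and `{C, C₁, C₂}` of columns, multiplying
the `R₁ × C₂` submatrix by a unimodular `z` and the `R₂ × C₁` submatrix by `conj z`
yields a complex Hadamard matrix. -/
theorem stmt_9 (n : ℕ) (H : Matrix (Fin n) (Fin n) ℂ)
    (hent : ∀ i j, ‖H i j‖ = 1)
    (hHad : H * H.conjTranspose = (n : ℂ) • 1)
    (R R₁ R₂ C C₁ C₂ : Finset (Fin n))
    (hRcover : R ∪ R₁ ∪ R₂ = Finset.univ)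
    (hR01 : Disjoint R R₁) (hR02 : Disjoint R R₂) (hR12 : Disjoint R₁ R₂)
    (hCcover : C ∪ C₁ ∪ C₂ = Finset.univ)
    (hC01 : Disjoint C C₁) (hC02 : Disjoint C C₂) (hC12 : Disjoint C₁ C₂)
    (s : ℂ)
    (h1 : ∀ j ∈ C, ∑ i ∈ R, H i j = s)
    (h2 : ∀ j ∈ C₁, ∑ i ∈ R₁, H i j = -(starRingEnd ℂ) s)
    (h3 : (∀ i ∈ R, ∀ j ∈ C₁, H i j = 1) ∧ (∀ i ∈ R₁, ∀ j ∈ C, H i j = 1))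
    (h4 : ∀ j ∈ C₂, ∑ i ∈ R, H i j = 0 ∧ ∑ i ∈ R₁, H i j = 0)
    (z : ℂ) (hz : ‖z‖ = 1)
    (K : Matrix (Fin n) (Fin n) ℂ)
    (hK : ∀ i j, K i j =
      if i ∈ R₁ ∧ j ∈ C₂ then z * H i j
      else if i ∈ R₂ ∧ j ∈ C₁ then (starRingEnd ℂ) z * H i j
      else H i j) :
    (∀ i j, ‖K i j‖ = 1) ∧ K * K.conjTranspose = (n : ℂ) • 1 := by
  have hz1 : (starRingEnd ℂ) z * z = 1 := by
    rw [mul_comm, Complex.mul_conj, Complex.normSq_eq_norm_sq, hz]; norm_num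
  have habsK : ∀ i j, ‖K i j‖ = 1 := by
    intro i j
    rw [hK]
    split_ifs with h h'
    · rw [norm_mul, hz, hent, one_mul]
    · rw [norm_mul, Complex.norm_conj, hz, hent, one_mul]
    · exact hent i j
  refine ⟨habsK, ?_⟩
  rcases Nat.eq_zero_or_pos n with hn | hn
  · subst hn
    ext i j
    exact i.elim0
  have hn' : (n : ℂ) ≠ 0 := Nat.cast_ne_zero.mpr hn.ne'
  have flip : ∀ A B : Matrix (Fin n) (Fin n) ℂ, A * B = (n : ℂ) • 1 → B * A = (n : ℂ) • 1 := by
    intro A B h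
    have ha : A * ((n : ℂ)⁻¹ • B) = 1 := by
      rw [Matrix.mul_smul, h, smul_smul, inv_mul_cancel₀ hn', one_smul]
    have hb := mul_eq_one_comm.mp ha
    calc B * A = (n : ℂ) • (((n : ℂ)⁻¹ • B) * A) := by
          rw [Matrix.smul_mul, smul_smul, mul_inv_cancel₀ hn', one_smul]
      _ = (n : ℂ) • 1 := by rw [hb]
  have hcol : H.conjTranspose * H = (n : ℂ) • 1 := flip _ _ hHad
  have hOrth : ∀ j j', ∑ i, (starRingEnd ℂ) (H i j) * H i j' = if j = j' then (n : ℂ) else 0 := by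
    intro j j'
    have h := congrFun (congrFun hcol j) j'
    simp only [Matrix.mul_apply, Matrix.conjTranspose_apply, Matrix.smul_apply, Matrix.one_apply,
      smul_eq_mul, Complex.star_def] at h
    rw [h]; split_ifs <;> ring
  have hsplit : ∀ f : Fin n → ℂ, ∑ i, f i = ∑ i ∈ R, f i + ∑ i ∈ R₁, f i + ∑ i ∈ R₂, f i := by
    intro f
    rw [← hRcover, Finset.sum_union (Finset.disjoint_union_left.mpr ⟨hR02, hR12⟩),
      Finset.sum_union hR01]
  have hKa : ∀ j ∈ C, ∀ i, K i j = H i j := by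
    intro j hj i
    have hj1 : j ∉ C₁ := Finset.disjoint_left.mp hC01 hj
    have hj2 : j ∉ C₂ := Finset.disjoint_left.mp hC02 hj
    rw [hK, if_neg (by tauto), if_neg (by tauto)]
  have hKb : ∀ j ∈ C₁, ∀ i, K i j = if i ∈ R₂ then (starRingEnd ℂ) z * H i j else H i j := by
    intro j hj i
    have hj2 : j ∉ C₂ := Finset.disjoint_left.mp hC12 hj
    rw [hK, if_neg (by tauto)]
    by_cases hi : i ∈ R₂
    · rw [if_pos ⟨hi, hj⟩, if_pos hi]
    · rw [if_neg (by tauto), if_neg hi]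
  have hKc : ∀ j ∈ C₂, ∀ i, K i j = if i ∈ R₁ then z * H i j else H i j := by
    intro j hj i
    have hj1 : j ∉ C₁ := Finset.disjoint_right.mp hC12 hj
    rw [hK]
    by_cases hi : i ∈ R₁
    · rw [if_pos ⟨hi, hj⟩, if_pos hi]
    · rw [if_neg (by tauto), if_neg (by tauto), if_neg hi]
  -- Case (C, C)
  have keyCC : ∀ j ∈ C, ∀ j' ∈ C,
      ∑ i, (starRingEnd ℂ) (K i j) * K i j' = if j = j' then (n : ℂ) else 0 := by
    intro j hj j' hj'
    rw [← hOrth j j']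
    exact Finset.sum_congr rfl fun i _ => by rw [hKa j hj i, hKa j' hj' i]
  -- Case (C₁, C₁)
  have keyC1C1 : ∀ j ∈ C₁, ∀ j' ∈ C₁,
      ∑ i, (starRingEnd ℂ) (K i j) * K i j' = if j = j' then (n : ℂ) else 0 := by
    intro j hj j' hj'
    rw [← hOrth j j']
    refine Finset.sum_congr rfl fun i _ => ?_
    rw [hKb j hj i, hKb j' hj' i]
    by_cases hi : i ∈ R₂
    · rw [if_pos hi, if_pos hi, map_mul, Complex.conj_conj]
      linear_combination ((starRingEnd ℂ) (H i j) * H i j') * hz1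
    · rw [if_neg hi, if_neg hi]
  -- Case (C₂, C₂)
  have keyC2C2 : ∀ j ∈ C₂, ∀ j' ∈ C₂,
      ∑ i, (starRingEnd ℂ) (K i j) * K i j' = if j = j' then (n : ℂ) else 0 := by
    intro j hj j' hj'
    rw [← hOrth j j']
    refine Finset.sum_congr rfl fun i _ => ?_
    rw [hKc j hj i, hKc j' hj' i]
    by_cases hi : i ∈ R₁
    · rw [if_pos hi, if_pos hi, map_mul]
      linear_combination ((starRingEnd ℂ) (H i j) * H i j') * hz1
    · rw [if_neg hi, if_neg hi]
  -- Case (C, C₁)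
  have keyCC1 : ∀ j ∈ C, ∀ j' ∈ C₁,
      ∑ i, (starRingEnd ℂ) (K i j) * K i j' = 0 := by
    intro j hj j' hj'
    have hne : j ≠ j' := fun h => Finset.disjoint_left.mp hC01 hj (h ▸ hj')
    have hSR : ∑ i ∈ R, (starRingEnd ℂ) (H i j) * H i j' = (starRingEnd ℂ) s := by
      calc ∑ i ∈ R, (starRingEnd ℂ) (H i j) * H i j'
          = ∑ i ∈ R, (starRingEnd ℂ) (H i j) := by
            exact Finset.sum_congr rfl fun i hi => by rw [h3.1 i hi j' hj', mul_one]
        _ = (starRingEnd ℂ) s := by rw [← map_sum, h1 j hj]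
    have hSR1 : ∑ i ∈ R₁, (starRingEnd ℂ) (H i j) * H i j' = -(starRingEnd ℂ) s := by
      calc ∑ i ∈ R₁, (starRingEnd ℂ) (H i j) * H i j'
          = ∑ i ∈ R₁, H i j' := by
            exact Finset.sum_congr rfl fun i hi => by rw [h3.2 i hi j hj, map_one, one_mul]
        _ = -(starRingEnd ℂ) s := h2 j' hj'
    have htot := hOrth j j'
    rw [hsplit, if_neg hne, hSR, hSR1] at htot
    have hSR2 : ∑ i ∈ R₂, (starRingEnd ℂ) (H i j) * H i j' = 0 := by linear_combination htot
    have hstep : ∑ i, (starRingEnd ℂ) (K i j) * K i j'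
        = ∑ i, (starRingEnd ℂ) (H i j) *
            (if i ∈ R₂ then (starRingEnd ℂ) z * H i j' else H i j') := by
      exact Finset.sum_congr rfl fun i _ => by rw [hKa j hj i, hKb j' hj' i]
    rw [hstep, hsplit]
    have e1 : ∑ i ∈ R, (starRingEnd ℂ) (H i j) *
        (if i ∈ R₂ then (starRingEnd ℂ) z * H i j' else H i j')
        = ∑ i ∈ R, (starRingEnd ℂ) (H i j) * H i j' :=
      Finset.sum_congr rfl fun i hi => by rw [if_neg (Finset.disjoint_left.mp hR02 hi)]
    have e2 : ∑ i ∈ R₁, (starRingEnd ℂ) (H i j) *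
        (if i ∈ R₂ then (starRingEnd ℂ) z * H i j' else H i j')
        = ∑ i ∈ R₁, (starRingEnd ℂ) (H i j) * H i j' :=
      Finset.sum_congr rfl fun i hi => by rw [if_neg (Finset.disjoint_left.mp hR12 hi)]
    have e3 : ∑ i ∈ R₂, (starRingEnd ℂ) (H i j) *
        (if i ∈ R₂ then (starRingEnd ℂ) z * H i j' else H i j')
        = (starRingEnd ℂ) z * ∑ i ∈ R₂, (starRingEnd ℂ) (H i j) * H i j' := by
      rw [Finset.mul_sum]
      exact Finset.sum_congr rfl fun i hi => by rw [if_pos hi]; ring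
    rw [e1, e2, e3, hSR, hSR1, hSR2, mul_zero]
    ring
  -- Case (C, C₂)
  have keyCC2 : ∀ j ∈ C, ∀ j' ∈ C₂,
      ∑ i, (starRingEnd ℂ) (K i j) * K i j' = 0 := by
    intro j hj j' hj'
    have hne : j ≠ j' := fun h => Finset.disjoint_left.mp hC02 hj (h ▸ hj')
    have hSR1 : ∑ i ∈ R₁, (starRingEnd ℂ) (H i j) * H i j' = 0 := by
      calc ∑ i ∈ R₁, (starRingEnd ℂ) (H i j) * H i j'
          = ∑ i ∈ R₁, H i j' := by
            exact Finset.sum_congr rfl fun i hi => by rw [h3.2 i hi j hj, map_one, one_mul]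
        _ = 0 := (h4 j' hj').2
    have htot := hOrth j j'
    rw [hsplit, if_neg hne, hSR1] at htot
    have hstep : ∑ i, (starRingEnd ℂ) (K i j) * K i j'
        = ∑ i, (starRingEnd ℂ) (H i j) * (if i ∈ R₁ then z * H i j' else H i j') := by
      exact Finset.sum_congr rfl fun i _ => by rw [hKa j hj i, hKc j' hj' i]
    rw [hstep, hsplit]
    have e1 : ∑ i ∈ R, (starRingEnd ℂ) (H i j) * (if i ∈ R₁ then z * H i j' else H i j')
        = ∑ i ∈ R, (starRingEnd ℂ) (H i j) * H i j' :=
      Finset.sum_congr rfl fun i hi => by rw [if_neg (Finset.disjoint_left.mp hR01 hi)]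
    have e2 : ∑ i ∈ R₁, (starRingEnd ℂ) (H i j) * (if i ∈ R₁ then z * H i j' else H i j')
        = z * ∑ i ∈ R₁, (starRingEnd ℂ) (H i j) * H i j' := by
      rw [Finset.mul_sum]
      exact Finset.sum_congr rfl fun i hi => by rw [if_pos hi]; ring
    have e3 : ∑ i ∈ R₂, (starRingEnd ℂ) (H i j) * (if i ∈ R₁ then z * H i j' else H i j')
        = ∑ i ∈ R₂, (starRingEnd ℂ) (H i j) * H i j' :=
      Finset.sum_congr rfl fun i hi => by rw [if_neg (Finset.disjoint_right.mp hR12 hi)]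
    rw [e1, e2, e3, hSR1, mul_zero]
    linear_combination htot
  -- Case (C₁, C₂)
  have keyC1C2 : ∀ j ∈ C₁, ∀ j' ∈ C₂,
      ∑ i, (starRingEnd ℂ) (K i j) * K i j' = 0 := by
    intro j hj j' hj'
    have hne : j ≠ j' := fun h => Finset.disjoint_left.mp hC12 hj (h ▸ hj')
    have hSR : ∑ i ∈ R, (starRingEnd ℂ) (H i j) * H i j' = 0 := by
      calc ∑ i ∈ R, (starRingEnd ℂ) (H i j) * H i j'
          = ∑ i ∈ R, H i j' := by
            exact Finset.sum_congr rfl fun i hi => by rw [h3.1 i hi j hj, map_one, one_mul]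
        _ = 0 := (h4 j' hj').1
    have htot := hOrth j j'
    rw [hsplit, if_neg hne, hSR] at htot
    have hstep : ∑ i, (starRingEnd ℂ) (K i j) * K i j'
        = ∑ i, (starRingEnd ℂ) (if i ∈ R₂ then (starRingEnd ℂ) z * H i j else H i j) *
            (if i ∈ R₁ then z * H i j' else H i j') := by
      exact Finset.sum_congr rfl fun i _ => by rw [hKb j hj i, hKc j' hj' i]
    rw [hstep, hsplit]
    have e1 : ∑ i ∈ R, (starRingEnd ℂ) (if i ∈ R₂ then (starRingEnd ℂ) z * H i j else H i j) *
        (if i ∈ R₁ then z * H i j' else H i j')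
        = ∑ i ∈ R, (starRingEnd ℂ) (H i j) * H i j' :=
      Finset.sum_congr rfl fun i hi => by
        rw [if_neg (Finset.disjoint_left.mp hR02 hi), if_neg (Finset.disjoint_left.mp hR01 hi)]
    have e2 : ∑ i ∈ R₁, (starRingEnd ℂ) (if i ∈ R₂ then (starRingEnd ℂ) z * H i j else H i j) *
        (if i ∈ R₁ then z * H i j' else H i j')
        = z * ∑ i ∈ R₁, (starRingEnd ℂ) (H i j) * H i j' := by
      rw [Finset.mul_sum]
      refine Finset.sum_congr rfl fun i hi => ?_
      rw [if_neg (Finset.disjoint_left.mp hR12 hi), if_pos hi]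
      ring
    have e3 : ∑ i ∈ R₂, (starRingEnd ℂ) (if i ∈ R₂ then (starRingEnd ℂ) z * H i j else H i j) *
        (if i ∈ R₁ then z * H i j' else H i j')
        = z * ∑ i ∈ R₂, (starRingEnd ℂ) (H i j) * H i j' := by
      rw [Finset.mul_sum]
      refine Finset.sum_congr rfl fun i hi => ?_
      rw [if_pos hi, if_neg (Finset.disjoint_right.mp hR12 hi), map_mul, Complex.conj_conj]
      ring
    rw [e1, e2, e3, hSR]
    linear_combination z * htot
  -- symmetry
  have hsym : ∀ a b : Fin n, ∑ i, (starRingEnd ℂ) (K i a) * K i b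
      = (starRingEnd ℂ) (∑ i, (starRingEnd ℂ) (K i b) * K i a) := by
    intro a b
    rw [map_sum]
    refine Finset.sum_congr rfl fun i _ => ?_
    rw [map_mul, Complex.conj_conj]
    ring
  have htri : ∀ j : Fin n, j ∈ C ∨ j ∈ C₁ ∨ j ∈ C₂ := by
    intro j
    have hj : j ∈ C ∪ C₁ ∪ C₂ := hCcover ▸ Finset.mem_univ j
    simpa [Finset.mem_union, or_assoc] using hj
  have hmain : ∀ j j', ∑ i, (starRingEnd ℂ) (K i j) * K i j'
      = if j = j' then (n : ℂ) else 0 := by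
    intro j j'
    have hzero : ∀ a b : Fin n, a ≠ b → (∑ i, (starRingEnd ℂ) (K i a) * K i b) = 0 →
        ∑ i, (starRingEnd ℂ) (K i a) * K i b = if a = b then (n : ℂ) else 0 := by
      intro a b hab h
      rw [h, if_neg hab]
    rcases htri j with hj | hj | hj <;> rcases htri j' with hj' | hj' | hj'
    · exact keyCC j hj j' hj'
    · exact hzero j j' (fun h => Finset.disjoint_left.mp hC01 hj (h ▸ hj')) (keyCC1 j hj j' hj')
    · exact hzero j j' (fun h => Finset.disjoint_left.mp hC02 hj (h ▸ hj')) (keyCC2 j hj j' hj')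
    · refine hzero j j' (fun h => Finset.disjoint_left.mp hC01 hj' (h ▸ hj)) ?_
      rw [hsym, keyCC1 j' hj' j hj, map_zero]
    · exact keyC1C1 j hj j' hj'
    · exact hzero j j' (fun h => Finset.disjoint_left.mp hC12 hj (h ▸ hj')) (keyC1C2 j hj j' hj')
    · refine hzero j j' ?_ ?_
      · intro h; exact Finset.disjoint_left.mp hC02 hj' (h ▸ hj)
      · rw [hsym, keyCC2 j' hj' j hj, map_zero]
    · refine hzero j j' ?_ ?_
      · intro h; exact Finset.disjoint_left.mp hC12 hj' (h ▸ hj)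
      · rw [hsym, keyC1C2 j' hj' j hj, map_zero]
    · exact keyC2C2 j hj j' hj'
  have hKcol : K.conjTranspose * K = (n : ℂ) • 1 := by
    ext j j'
    have h := hmain j j'
    simp only [Matrix.mul_apply, Matrix.conjTranspose_apply, Matrix.smul_apply, Matrix.one_apply,
      smul_eq_mul, Complex.star_def]
    rw [h]
    split_ifs <;> ring
  exact flip _ _ hKcol
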